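/- Let V be a finite-dimensional real vector space and L ⊆ 𝕋_ℂV a lagrangian subspace with L ∩ L̄ = 0. Let W ⊆ V be a subspace of codimension r, with inclusion ι : W → V and complexified inclusion ι_ℂ : W_ℂ → V_ℂ. Then the backward image ι^!L := {X + ξ∘ι_ℂ : X ∈ W_ℂ, ξ ∈ (V_ℂ)*, X + ξ ∈ L} ⊆ 𝕋_ℂW satisfies dim_ℂ(ι^!L ∩ conj(ι^!L)) ≤ r. -/

import Mathlib

open TensorProduct Module

noncomputable section

namespace CDirac


/-- The real generalized tangent space `V ⊕ V*`. -/
abbrev TR (V : Type*) [AddCommGroup V] [Module ℝ V] := V × (V →ₗ[ℝ] ℝ)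

variable {V : Type*} [AddCommGroup V] [Module ℝ V]

/-- The canonical pairing `⟨X+ξ, Y+η⟩ = (η X + ξ Y)/2` on `𝕋V`. -/
def pairR (a b : TR V) : ℝ := (b.2 a.1 + a.2 b.1) / 2

lemma pairR_add_left (a a' b : TR V) : pairR (a + a') b = pairR a b + pairR a' b := by
  simp only [pairR, Prod.fst_add, Prod.snd_add, map_add, LinearMap.add_apply]
  ring

lemma pairR_smul_left (c : ℝ) (a b : TR V) : pairR (c • a) b = c * pairR a b := by
  simp only [pairR, Prod.smul_fst, Prod.smul_snd, map_smul, LinearMap.smul_apply,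
    smul_eq_mul]
  ring

/-- Orthogonal complement with respect to the pairing on `𝕋V`. -/
def orthR (L : Submodule ℝ (TR V)) : Submodule ℝ (TR V) where
  carrier := {a | ∀ b ∈ L, pairR a b = 0}
  zero_mem' := fun b _ => by simp [pairR]
  add_mem' := fun {a a'} ha ha' b hb => by
    rw [pairR_add_left, ha b hb, ha' b hb, add_zero]
  smul_mem' := fun c a ha b hb => by rw [pairR_smul_left, ha b hb, mul_zero]

/-- A real lagrangian subspace: `L = L^⊥`. -/
def IsLagrangianR (L : Submodule ℝ (TR V)) : Prop := L = orthR L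

/-- An isotropic subspace of `𝕋V`. -/
def IsIsotropicR (K : Submodule ℝ (TR V)) : Prop := ∀ a ∈ K, ∀ b ∈ K, pairR a b = 0

/-- The quotient `K^⊥/K`. -/
abbrev quotK (K : Submodule ℝ (TR V)) :=
  @HasQuotient.Quotient _ _ (@Submodule.hasQuotient ℝ _ _ (orthR K).addCommGroup _)
    (K.comap (orthR K).subtype)

/-- The quotient map `K^⊥ → K^⊥/K`. -/
def mkK (K : Submodule ℝ (TR V)) : ↥(orthR K) →ₗ[ℝ] quotK K :=
  @Submodule.mkQ ℝ _ _ (orthR K).addCommGroup _ (K.comap (orthR K).subtype)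




/-- The complexification `V_ℂ = ℂ ⊗_ℝ V`. -/
abbrev Cx (V : Type*) [AddCommGroup V] [Module ℝ V] := ℂ ⊗[ℝ] V

/-- The complex dual `(V_ℂ)^*`. -/
abbrev DualC (V : Type*) [AddCommGroup V] [Module ℝ V] := Cx V →ₗ[ℂ] ℂ

/-- The complexified generalized tangent space `𝕋_ℂ V = V_ℂ ⊕ (V_ℂ)^*`. -/
abbrev TCx (V : Type*) [AddCommGroup V] [Module ℝ V] := Cx V × DualC V

/-- The ℂ-bilinear pairing on `𝕋_ℂ V`. -/
def pairC (a b : TCx V) : ℂ := (b.2 a.1 + a.2 b.1) / 2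

lemma pairC_add_left (a a' b : TCx V) : pairC (a + a') b = pairC a b + pairC a' b := by
  simp only [pairC, Prod.fst_add, Prod.snd_add, map_add, LinearMap.add_apply]
  ring

lemma pairC_smul_left (c : ℂ) (a b : TCx V) : pairC (c • a) b = c * pairC a b := by
  simp only [pairC, Prod.smul_fst, Prod.smul_snd, map_smul, LinearMap.smul_apply,
    smul_eq_mul]
  ring

/-- Orthogonal complement with respect to the ℂ-bilinear pairing on `𝕋_ℂ V`. -/
def orthC (L : Submodule ℂ (TCx V)) : Submodule ℂ (TCx V) where
  carrier := {a | ∀ b ∈ L, pairC a b = 0}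
  zero_mem' := fun b _ => by simp [pairC]
  add_mem' := fun {a a'} ha ha' b hb => by
    rw [pairC_add_left, ha b hb, ha' b hb, add_zero]
  smul_mem' := fun c a ha b hb => by rw [pairC_smul_left, ha b hb, mul_zero]

/-- A complex lagrangian subspace: `L = L^⊥`. -/
def IsLagrangianC (L : Submodule ℂ (TCx V)) : Prop := L = orthC L

private lemma conjCxAux_smul (z : ℂ) (x : Cx V) :
    TensorProduct.map Complex.conjAe.toLinearMap LinearMap.id (z • x) =
      starRingEnd ℂ z • TensorProduct.map Complex.conjAe.toLinearMap LinearMap.id x := by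
  induction x using TensorProduct.induction_on with
  | zero => simp
  | tmul w v => simp [smul_tmul', smul_eq_mul, Complex.conjAe_coe, map_mul]
  | add x y hx hy => simp only [smul_add, map_add, hx, hy]

/-- Conjugation on `V_ℂ`, as a `conj`-semilinear map. -/
def conjCx : Cx V →ₛₗ[starRingEnd ℂ] Cx V where
  toFun := TensorProduct.map Complex.conjAe.toLinearMap LinearMap.id
  map_add' := map_add _
  map_smul' := conjCxAux_smul

lemma conjCx_smul (z : ℂ) (x : Cx V) :
    conjCx (z • x) = starRingEnd ℂ z • conjCx x := conjCxAux_smul z x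

/-- Conjugation of a complex linear functional. -/
def conjDualFun (ξ : DualC V) : DualC V where
  toFun x := starRingEnd ℂ (ξ (conjCx x))
  map_add' x y := by simp
  map_smul' z x := by
    rw [conjCx_smul, map_smul, smul_eq_mul, map_mul, RingHom.id_apply]
    simp [smul_eq_mul]

/-- Conjugation on `(V_ℂ)^*`, as a `conj`-semilinear map. -/
def conjDual : DualC V →ₛₗ[starRingEnd ℂ] DualC V where
  toFun := conjDualFun
  map_add' ξ η := by ext x; simp [conjDualFun]
  map_smul' z ξ := by
    ext x
    simp [conjDualFun, smul_eq_mul, map_mul]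

/-- Conjugation on `𝕋_ℂ V`, as a `conj`-semilinear map. -/
def conjT : TCx V →ₛₗ[starRingEnd ℂ] TCx V where
  toFun a := (conjCx a.1, conjDual a.2)
  map_add' a b := by simp [Prod.ext_iff]
  map_smul' z a := by
    simp [Prod.ext_iff, Prod.smul_fst, Prod.smul_snd, map_smulₛₗ]

instance : RingHomSurjective (starRingEnd ℂ) :=
  ⟨fun z => ⟨starRingEnd ℂ z, by simp⟩⟩

/-- The conjugate `L̄` of a ℂ-subspace of `𝕋_ℂ V`. -/
def conjSub (L : Submodule ℂ (TCx V)) : Submodule ℂ (TCx V) := L.map conjT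

/-- The conjugate `Ē` of a ℂ-subspace of `V_ℂ`. -/
def conjE (E : Submodule ℂ (Cx V)) : Submodule ℂ (Cx V) := E.map conjCx

/-- The canonical inclusion `V → V_ℂ`, `v ↦ 1 ⊗ v`. -/
def iV : V →ₗ[ℝ] Cx V := TensorProduct.mk ℝ ℂ V 1





/-- ℝ-linear auxiliary version of the ℂ-linear extension of a real functional. -/
def dualExtAux (α : V →ₗ[ℝ] ℝ) : Cx V →ₗ[ℝ] ℂ :=
  TensorProduct.lift
    (LinearMap.mk₂ ℝ (fun z v => z * (α v : ℂ))
      (fun z w v => by push_cast; ring)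
      (fun r z v => by simp only [Complex.real_smul]; ring)
      (fun z v w => by push_cast [map_add]; ring)
      (fun r z v => by simp only [map_smul, smul_eq_mul, Complex.real_smul]; push_cast; ring))

private lemma dualExtAux_smulC (α : V →ₗ[ℝ] ℝ) (z : ℂ) (x : Cx V) :
    dualExtAux α (z • x) = z * dualExtAux α x := by
  induction x using TensorProduct.induction_on with
  | zero => simp
  | tmul w v =>
      simp only [dualExtAux, smul_tmul', lift.tmul, LinearMap.mk₂_apply, smul_eq_mul]
      ring
  | add x y hx hy => simp only [smul_add, map_add, hx, hy]; ring

/-- The ℂ-linear extension of a real functional `α : V → ℝ` to `V_ℂ`. -/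
def dualExtFun (α : V →ₗ[ℝ] ℝ) : DualC V where
  toFun := dualExtAux α
  map_add' := map_add _
  map_smul' z x := by simpa using dualExtAux_smulC α z x

private lemma dualExtFun_tmul (α : V →ₗ[ℝ] ℝ) (z : ℂ) (v : V) :
    dualExtFun α (z ⊗ₜ[ℝ] v) = z * (α v : ℂ) := by
  simp [dualExtFun, dualExtAux]

/-- The ℂ-linear extension map `V^* → (V_ℂ)^*`, as an ℝ-linear map. -/
def dualExt : (V →ₗ[ℝ] ℝ) →ₗ[ℝ] DualC V where
  toFun := dualExtFun
  map_add' α β := by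
    apply LinearMap.ext; intro x
    induction x using TensorProduct.induction_on with
    | zero => simp
    | tmul w v =>
        simp only [dualExtFun_tmul, LinearMap.add_apply]
        push_cast
        ring
    | add x y hx hy =>
        simp only [map_add, LinearMap.add_apply] at *
        rw [hx, hy]
  map_smul' r α := by
    apply LinearMap.ext; intro x
    induction x using TensorProduct.induction_on with
    | zero => simp
    | tmul w v =>
        simp only [dualExtFun_tmul, RingHom.id_apply, LinearMap.smul_apply,
          LinearMap.smul_apply, smul_eq_mul, Complex.real_smul]
        push_cast
        ring
    | add x y hx hy =>
        simp only [map_add, RingHom.id_apply, LinearMap.smul_apply, smul_eq_mul] at *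
        rw [hx, hy]

/-- The canonical inclusion `𝕋V → 𝕋_ℂV`. -/
def iT : TR V →ₗ[ℝ] TCx V where
  toFun a := (iV a.1, dualExt a.2)
  map_add' a b := by simp [Prod.ext_iff]
  map_smul' r a := by simp [Prod.ext_iff]



/-- Auxiliary ℝ-linear version of the ℂ-bilinear extension of a real bilinear form. -/
def bilinExtAux (B : V →ₗ[ℝ] V →ₗ[ℝ] ℝ) : Cx V →ₗ[ℝ] DualC V :=
  TensorProduct.lift
    (LinearMap.mk₂ ℝ (fun z v => z • dualExt (B v))
      (fun z w v => by simp only [add_smul])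
      (fun r z v => by simp only [smul_assoc])
      (fun z v w => by simp only [map_add, smul_add])
      (fun r z v => by simp only [map_smul]; exact smul_comm z r _))

private lemma bilinExtAux_smulC (B : V →ₗ[ℝ] V →ₗ[ℝ] ℝ) (z : ℂ) (x : Cx V) :
    bilinExtAux B (z • x) = z • bilinExtAux B x := by
  induction x using TensorProduct.induction_on with
  | zero => simp
  | tmul w v =>
      simp only [bilinExtAux, smul_tmul', lift.tmul, LinearMap.mk₂_apply, smul_eq_mul,
        mul_smul]
  | add x y hx hy => simp only [smul_add, map_add, hx, hy]

/-- The ℂ-bilinear extension of a real bilinear form `B : V × V → ℝ` to `V_ℂ`. -/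
def bilinExt (B : V →ₗ[ℝ] V →ₗ[ℝ] ℝ) : Cx V →ₗ[ℂ] DualC V where
  toFun := bilinExtAux B
  map_add' := map_add _
  map_smul' z x := by simpa using bilinExtAux_smulC B z x

/-- The `B`-transformation `e^B(X+ξ) = X + ξ + B̃(X,·)` of `𝕋_ℂV`, for a real `B`. -/
def eB (B : V →ₗ[ℝ] V →ₗ[ℝ] ℝ) : TCx V →ₗ[ℂ] TCx V where
  toFun a := (a.1, a.2 + bilinExt B a.1)
  map_add' a b := by
    simp only [Prod.fst_add, Prod.snd_add, map_add, Prod.mk_add_mk, Prod.mk.injEq]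
    exact ⟨trivial, by abel⟩
  map_smul' z a := by
    simp only [Prod.smul_fst, Prod.smul_snd, map_smul, RingHom.id_apply, Prod.smul_mk,
      Prod.mk.injEq, smul_add]

/-- The real `B`-transformation `e^B(X+α) = X + α + B(X,·)` of `𝕋V`. -/
def eBR (B : V →ₗ[ℝ] V →ₗ[ℝ] ℝ) : TR V →ₗ[ℝ] TR V where
  toFun a := (a.1, a.2 + B a.1)
  map_add' a b := by
    simp only [Prod.fst_add, Prod.snd_add, map_add, Prod.mk_add_mk, Prod.mk.injEq]
    exact ⟨trivial, by abel⟩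
  map_smul' r a := by
    simp only [Prod.smul_fst, Prod.smul_snd, map_smul, RingHom.id_apply, Prod.smul_mk,
      Prod.mk.injEq, smul_add]


/-- The range `E = pr_{V_ℂ}(L)` of a subspace of `𝕋_ℂV`. -/
def Esub (L : Submodule ℂ (TCx V)) : Submodule ℂ (Cx V) :=
  L.map (LinearMap.fst ℂ (Cx V) (DualC V))

/-- The real index `r = dim_ℂ (L ∩ L̄)`. -/
def riL (L : Submodule ℂ (TCx V)) : ℕ := finrank ℂ ↥(L ⊓ conjSub L)

/-- The real part `K = (L ∩ L̄) ∩ 𝕋V`, as a subspace of `𝕋V`. -/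
def Ksub (L : Submodule ℂ (TCx V)) : Submodule ℝ (TR V) :=
  ((L ⊓ conjSub L).restrictScalars ℝ).comap iT

/-- The distribution `D = (E + Ē) ∩ V`, as a subspace of `V`. -/
def Dsub (L : Submodule ℂ (TCx V)) : Submodule ℝ V :=
  ((Esub L ⊔ conjE (Esub L)).restrictScalars ℝ).comap iV

/-- The distribution `Δ = (E ∩ Ē) ∩ V`, as a subspace of `V`. -/
def DeltaSub (L : Submodule ℂ (TCx V)) : Submodule ℝ V :=
  ((Esub L ⊓ conjE (Esub L)).restrictScalars ℝ).comap iV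

/-- The order `s = dim V - dim D`. -/
def orderL (L : Submodule ℂ (TCx V)) : ℕ := finrank ℝ V - finrank ℝ ↥(Dsub L)

/-- The (normalized) type `k = dim_ℂ(E + Ē) - dim_ℂ E`. -/
def typeL (L : Submodule ℂ (TCx V)) : ℕ :=
  finrank ℂ ↥(Esub L ⊔ conjE (Esub L)) - finrank ℂ ↥(Esub L)


section Aux2

variable {V : Type*} [AddCommGroup V] [Module ℝ V]

lemma conjCx_tmul (z : ℂ) (v : V) : conjCx (z ⊗ₜ[ℝ] v) = (starRingEnd ℂ z) ⊗ₜ[ℝ] v := by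
  simp [conjCx, Complex.conjAe_coe]

lemma conjCx_conjCx (x : Cx V) : conjCx (conjCx x) = x := by
  induction x using TensorProduct.induction_on with
  | zero => simp
  | tmul z v => simp [conjCx_tmul]
  | add x y hx hy => simp only [map_add, hx, hy]

lemma conjDual_apply (ξ : DualC V) (x : Cx V) :
    conjDual ξ x = starRingEnd ℂ (ξ (conjCx x)) := rfl

lemma conjDual_conjDual (ξ : DualC V) : conjDual (conjDual ξ) = ξ := by
  ext x
  simp [conjDual_apply, conjCx_conjCx]

lemma conjT_apply (a : TCx V) : conjT a = (conjCx a.1, conjDual a.2) := rfl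

lemma conjT_conjT (a : TCx V) : conjT (conjT a) = a := by
  simp [conjT_apply, conjCx_conjCx, conjDual_conjDual]

lemma mem_conjSub_iff {L : Submodule ℂ (TCx V)} {a : TCx V} :
    a ∈ conjSub L ↔ conjT a ∈ L := by
  constructor
  · rintro ⟨b, hb, rfl⟩
    rwa [conjT_conjT]
  · intro h
    exact ⟨conjT a, h, conjT_conjT a⟩

variable {W : Type*} [AddCommGroup W] [Module ℝ W]

lemma conjCx_baseChange (f : W →ₗ[ℝ] V) (x : Cx W) :
    conjCx (f.baseChange ℂ x) = f.baseChange ℂ (conjCx x) := by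
  induction x using TensorProduct.induction_on with
  | zero => simp
  | tmul z v => simp [conjCx_tmul]
  | add x y hx hy => simp only [map_add, hx, hy]

lemma conjDual_comp (f : W →ₗ[ℝ] V) (ξ : DualC V) :
    conjDual (ξ.comp (f.baseChange ℂ)) = (conjDual ξ).comp (f.baseChange ℂ) := by
  ext x
  simp [conjDual_apply, conjCx_baseChange, conjCx_tmul]


end Aux2

section Aux3

variable {V : Type*} [AddCommGroup V] [Module ℝ V] (W : Submodule ℝ V)

/-- Complexified inclusion. -/
def ic : Cx ↥W →ₗ[ℂ] Cx V := LinearMap.baseChange ℂ W.subtype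

/-- `(X,ξ,η) ↦ (ι X, ξ)`. -/
def tf1 : (Cx ↥W × DualC V × DualC V) →ₗ[ℂ] TCx V :=
  ((ic W).comp (LinearMap.fst ℂ (Cx ↥W) (DualC V × DualC V))).prod
    ((LinearMap.fst ℂ (DualC V) (DualC V)).comp (LinearMap.snd ℂ (Cx ↥W) (DualC V × DualC V)))

/-- `(X,ξ,η) ↦ (ι X, η)`. -/
def tf2 : (Cx ↥W × DualC V × DualC V) →ₗ[ℂ] TCx V :=
  ((ic W).comp (LinearMap.fst ℂ (Cx ↥W) (DualC V × DualC V))).prod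
    ((LinearMap.snd ℂ (DualC V) (DualC V)).comp (LinearMap.snd ℂ (Cx ↥W) (DualC V × DualC V)))

/-- `(X,ξ,η) ↦ ξ - η`. -/
def tsig : (Cx ↥W × DualC V × DualC V) →ₗ[ℂ] DualC V :=
  (LinearMap.fst ℂ (DualC V) (DualC V)).comp (LinearMap.snd ℂ (Cx ↥W) (DualC V × DualC V)) -
  (LinearMap.snd ℂ (DualC V) (DualC V)).comp (LinearMap.snd ℂ (Cx ↥W) (DualC V × DualC V))

/-- `(X,ξ,η) ↦ (X, ξ ∘ ι)`. -/
def tpi : (Cx ↥W × DualC V × DualC V) →ₗ[ℂ] TCx ↥W :=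
  (LinearMap.fst ℂ (Cx ↥W) (DualC V × DualC V)).prod
    (((ic W).dualMap).comp ((LinearMap.fst ℂ (DualC V) (DualC V)).comp
      (LinearMap.snd ℂ (Cx ↥W) (DualC V × DualC V))))

lemma tf1_apply (p : Cx ↥W × DualC V × DualC V) : tf1 W p = (ic W p.1, p.2.1) := rfl
lemma tf2_apply (p : Cx ↥W × DualC V × DualC V) : tf2 W p = (ic W p.1, p.2.2) := rfl
lemma tsig_apply (p : Cx ↥W × DualC V × DualC V) : tsig W p = p.2.1 - p.2.2 := rfl
lemma tpi_apply (p : Cx ↥W × DualC V × DualC V) :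
    tpi W p = (p.1, p.2.1.comp (ic W)) := rfl

lemma dualMap_ic_apply (ξ : DualC V) : (ic W).dualMap ξ = ξ.comp (ic W) := rfl

lemma ic_injective : Function.Injective (ic W) := by
  obtain ⟨g, hg⟩ := W.subtype.exists_leftInverse_of_injective W.ker_subtype
  have h : (g.baseChange ℂ).comp (ic W) = LinearMap.id := by
    rw [ic, ← LinearMap.baseChange_comp, hg, LinearMap.baseChange_id]
  intro x y hxy
  have := congrArg (g.baseChange ℂ) hxy
  simpa [← LinearMap.comp_apply, h] using this

end Aux3

end CDirac

open CDirac Module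

set_option maxHeartbeats 1000000
set_option synthInstance.maxHeartbeats 1000000

/-- If `L ⊆ 𝕋_ℂV` is lagrangian with `L ∩ L̄ = 0` and `W ⊆ V` has
codimension `r`, then the backward image `ι^!L` under the inclusion `ι : W → V`
satisfies `dim_ℂ(ι^!L ∩ conj(ι^!L)) ≤ r`. -/
theorem stmt2 (V : Type*) [AddCommGroup V] [Module ℝ V] [FiniteDimensional ℝ V]
    (L : Submodule ℂ (TCx V)) (hL : IsLagrangianC L) (hreal : L ⊓ conjSub L = ⊥)
    (W : Submodule ℝ V) (r : ℕ) (hW : finrank ℝ V = finrank ℝ ↥W + r)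
    (L' : Submodule ℂ (TCx ↥W))
    (hL' : (L' : Set (TCx ↥W)) =
      {a : TCx ↥W | ∃ (X : Cx ↥W) (ξ : DualC V),
        a = (X, ξ.comp (LinearMap.baseChange ℂ W.subtype)) ∧
        ((LinearMap.baseChange ℂ W.subtype) X, ξ) ∈ L}) :
    finrank ℂ ↥(L' ⊓ conjSub L') ≤ r := by
  classical
  have hinj := ic_injective W
  -- The subspace `P` of triples `(X, ξ, η)` with `(ιX, ξ) ∈ L`, `(ιX, η) ∈ L̄`,
  -- and `ξ∘ι = η∘ι`.
  set A : Submodule ℂ (DualC V) := LinearMap.ker ((ic W).dualMap) with hA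
  set P : Submodule ℂ (Cx ↥W × DualC V × DualC V) :=
    (L.comap (tf1 W)) ⊓ ((conjSub L).comap (tf2 W)) ⊓ (A.comap (tsig W)) with hP
  -- Step 1: `L' ⊓ conjSub L' ≤ P.map (tpi W)`.
  have hle : L' ⊓ conjSub L' ≤ P.map (tpi W) := by
    rintro a ⟨ha1, ha2⟩
    have ha1' : a ∈ (L' : Set (TCx ↥W)) := ha1
    rw [hL'] at ha1'
    obtain ⟨X, ξ, haeq, hXξ⟩ := ha1'
    have ha2' : conjT a ∈ (L' : Set (TCx ↥W)) := mem_conjSub_iff.mp ha2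
    rw [hL'] at ha2'
    obtain ⟨Y, η', heq2, hYη⟩ := ha2'
    rw [haeq, conjT_apply] at heq2
    have hY : Y = conjCx X := by
      have := congrArg Prod.fst heq2
      exact this.symm
    have hsnd : conjDual (ξ.comp (LinearMap.baseChange ℂ W.subtype)) =
        η'.comp (LinearMap.baseChange ℂ W.subtype) := congrArg Prod.snd heq2
    have hcomp : ξ.comp (ic W) = (conjDual η').comp (ic W) := by
      have := congrArg conjDual hsnd
      rw [conjDual_conjDual, conjDual_comp] at this
      exact this
    refine ⟨(X, ξ, conjDual η'), ⟨⟨?_, ?_⟩, ?_⟩, ?_⟩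
    · -- (ι X, ξ) ∈ L
      show tf1 W (X, ξ, conjDual η') ∈ L
      rw [tf1_apply]
      exact hXξ
    · -- (ι X, conjDual η') ∈ conjSub L
      show tf2 W (X, ξ, conjDual η') ∈ conjSub L
      rw [tf2_apply, mem_conjSub_iff, conjT_apply]
      have h1 : conjCx (ic W X) = ic W Y := by
        rw [hY, ic, conjCx_baseChange]
      have h2 : conjDual (conjDual η') = η' := conjDual_conjDual η'
      rw [h1, h2]
      exact hYη
    · -- ξ - conjDual η' ∈ A
      show tsig W (X, ξ, conjDual η') ∈ A
      rw [tsig_apply, hA, LinearMap.mem_ker, dualMap_ic_apply]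
      rw [LinearMap.sub_comp, hcomp, sub_self]
    · show tpi W (X, ξ, conjDual η') = a
      rw [tpi_apply, haeq]
      rfl
  -- Step 2: reduce to `finrank P`.
  haveI : FiniteDimensional ℂ (Cx V) := Module.Finite.base_change ℝ ℂ V
  haveI : FiniteDimensional ℂ (Cx ↥W) := Module.Finite.base_change ℝ ℂ ↥W
  set_option synthInstance.maxHeartbeats 1000000 in
  set_option maxHeartbeats 1000000 in
  have step2 : finrank ℂ ↥(L' ⊓ conjSub L') ≤ finrank ℂ ↥P := by
    calc finrank ℂ ↥(L' ⊓ conjSub L') ≤ finrank ℂ ↥(P.map (tpi W)) :=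
          Submodule.finrank_mono hle
      _ ≤ finrank ℂ ↥P := Submodule.finrank_map_le _ _
  -- Step 3: `tsig` is injective on `P`, so `finrank P ≤ finrank A`.
  have hker0 : LinearMap.ker ((tsig W).comp P.subtype) = ⊥ := by
    rw [Submodule.eq_bot_iff]
    rintro ⟨⟨X, ξ, η⟩, hp⟩ hker
    rw [LinearMap.mem_ker, LinearMap.comp_apply] at hker
    have hξη : ξ = η := by
      have : ξ - η = 0 := hker
      rwa [sub_eq_zero] at this
    obtain ⟨⟨hp1, hp2⟩, _⟩ := hp
    have hp1' : ((ic W X, ξ) : TCx V) ∈ L := hp1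
    have hp2' : ((ic W X, η) : TCx V) ∈ conjSub L := hp2
    have hbot : ((ic W X, ξ) : TCx V) ∈ L ⊓ conjSub L := ⟨hp1', by rw [hξη]; exact hp2'⟩
    rw [hreal, Submodule.mem_bot, Prod.mk_eq_zero] at hbot
    have hX : X = 0 := hinj (by rw [hbot.1, map_zero])
    apply Subtype.ext
    show ((X, ξ, η) : Cx ↥W × DualC V × DualC V) = 0
    rw [Prod.mk_eq_zero, Prod.mk_eq_zero]
    exact ⟨hX, hbot.2, by rw [← hξη]; exact hbot.2⟩
  have hginj : Function.Injective ((tsig W).comp P.subtype) := LinearMap.ker_eq_bot.mp hker0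
  have hrange : LinearMap.range ((tsig W).comp P.subtype) ≤ A := by
    rintro _ ⟨⟨p, hp⟩, rfl⟩
    exact hp.2
  have step3 : finrank ℂ ↥P ≤ finrank ℂ ↥A := by
    rw [← LinearMap.finrank_range_of_inj hginj]
    exact Submodule.finrank_mono hrange
  -- Step 4: `finrank A = r`.
  have hsurj : Function.Surjective ((ic W).dualMap) :=
    LinearMap.dualMap_surjective_of_injective hinj
  have hrn := LinearMap.finrank_range_add_finrank_ker ((ic W).dualMap)
  have hrange_eq : finrank ℂ ↥(LinearMap.range ((ic W).dualMap)) = finrank ℝ ↥W := by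
    rw [LinearMap.range_eq_top.mpr hsurj, finrank_top, Subspace.dual_finrank_eq,
      Module.finrank_baseChange]
  have hdV : finrank ℂ (Module.Dual ℂ (Cx V)) = finrank ℝ V := by
    rw [Subspace.dual_finrank_eq, Module.finrank_baseChange]
  have hAr : finrank ℂ ↥A = r := by
    rw [hA]
    rw [hrange_eq, hdV] at hrn
    have key : finrank ℝ ↥W + finrank ℂ ↥(LinearMap.ker ((ic W).dualMap)) =
        finrank ℝ ↥W + r := by rw [hrn]; exact hW
    exact Nat.add_left_cancel key
  rw [← hAr]
  exact le_trans step2 step3
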